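/- arXiv:2411.11201 — 5 statements merged into one kernel-verified Lean document; each statement's English description precedes it below -/
import Mathlib

section
/- Let p be an odd prime and define L(d) = ∑_{i=(p+1)/2}^{p-1} ( ⌊i·d/p⌋ - ⌊i·d/p - (1 - 1/p)·(p+1)·d/(2p)⌋ ). Then L(p²+1) = ((p-1)/2)·((p²-1)/2). -/
/-- The Booher–Cais lower bound `L(d)` specialized to `j = (p+1)/2`. -/
def L (p d : ℕ) : ℤ :=
  ∑ i ∈ Finset.Icc ((p + 1) / 2) (p - 1),
    (⌊((i : ℚ) * d) / p⌋ -
      ⌊((i : ℚ) * d) / p - (1 - 1 / (p : ℚ)) * (((p : ℚ) + 1) * d) / (2 * p)⌋)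

theorem stmt_2 (p : ℕ) (hp : p.Prime) (hodd : Odd p) :
    L p (p ^ 2 + 1) = (((p - 1) / 2) * ((p ^ 2 - 1) / 2) : ℕ) := by
  obtain ⟨k, rfl⟩ := hodd
  have hk1 : 1 ≤ k := by
    by_contra h
    push_neg at h
    interval_cases k
    · norm_num at hp
  have h1 : (2 * k + 1 + 1) / 2 = k + 1 := by omega
  have h2 : 2 * k + 1 - 1 = 2 * k := by omega
  unfold L
  rw [h1, h2]
  have hK1 : (1 : ℚ) ≤ (k : ℚ) := by exact_mod_cast hk1
  have hq0 : (0 : ℚ) < ((2 * k + 1 : ℕ) : ℚ) := by positivity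
  have hterm : ∀ i ∈ Finset.Icc (k + 1) (2 * k),
      (⌊((i : ℚ) * (((2 * k + 1) ^ 2 + 1 : ℕ) : ℚ)) / ((2 * k + 1 : ℕ) : ℚ)⌋ -
        ⌊((i : ℚ) * (((2 * k + 1) ^ 2 + 1 : ℕ) : ℚ)) / ((2 * k + 1 : ℕ) : ℚ) -
          (1 - 1 / ((2 * k + 1 : ℕ) : ℚ)) *
            ((((2 * k + 1 : ℕ) : ℚ) + 1) * (((2 * k + 1) ^ 2 + 1 : ℕ) : ℚ)) /
            (2 * ((2 * k + 1 : ℕ) : ℚ))⌋) = ((2 * k ^ 2 + 2 * k : ℕ) : ℤ) := by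
    intro i hi
    rw [Finset.mem_Icc] at hi
    have hI1 : ((k : ℚ) + 1) ≤ (i : ℚ) := by exact_mod_cast hi.1
    have hI2 : (i : ℚ) ≤ 2 * (k : ℚ) := by exact_mod_cast hi.2
    set K : ℚ := (k : ℚ) with hK
    set q : ℚ := ((2 * k + 1 : ℕ) : ℚ) with hqdef
    have hq : q = 2 * K + 1 := by push_cast [hqdef, hK]; ring
    have hq0' : q ≠ 0 := ne_of_gt hq0
    set I : ℚ := (i : ℚ) with hI
    have hd : (((2 * k + 1) ^ 2 + 1 : ℕ) : ℚ) = q ^ 2 + 1 := by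
      push_cast [hqdef]; ring
    have hf1 : ⌊(I * (((2 * k + 1) ^ 2 + 1 : ℕ) : ℚ)) / q⌋ = (i * (2 * k + 1) : ℕ) := by
      rw [Int.floor_eq_iff]
      rw [hd]
      constructor
      · rw [le_div_iff₀ hq0]
        push_cast [hqdef, hI]
        nlinarith [hI1, hK1, hq0]
      · rw [div_lt_iff₀ hq0]
        push_cast [hqdef, hI]
        nlinarith [hI2, hK1]
    have hE : (I * (((2 * k + 1) ^ 2 + 1 : ℕ) : ℚ)) / q -
        (1 - 1 / q) * ((q + 1) * (((2 * k + 1) ^ 2 + 1 : ℕ) : ℚ)) / (2 * q) =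
        ((q ^ 2 + 1) * (2 * I * q - q ^ 2 + 1)) / (2 * q ^ 2) := by
      rw [hd]; field_simp; ring
    have hf2 : ⌊(I * (((2 * k + 1) ^ 2 + 1 : ℕ) : ℚ)) / q -
        (1 - 1 / q) * ((q + 1) * (((2 * k + 1) ^ 2 + 1 : ℕ) : ℚ)) / (2 * q)⌋ =
        ((i * (2 * k + 1) : ℕ) : ℤ) - ((2 * k ^ 2 + 2 * k : ℕ) : ℤ) := by
      rw [hE, Int.floor_eq_iff]
      have h2q2 : (0 : ℚ) < 2 * q ^ 2 := by positivity
      constructor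
      · rw [le_div_iff₀ h2q2]
        push_cast [hqdef, hI, hK]
        nlinarith [hI1, hK1]
      · rw [div_lt_iff₀ h2q2]
        push_cast [hqdef, hI, hK]
        nlinarith [hI2, hK1]
    rw [hf1, hf2]
    push_cast
    ring
  rw [Finset.sum_congr rfl hterm, Finset.sum_const, Nat.card_Icc]
  have : 2 * k + 1 - (k + 1) = k := by omega
  rw [this]
  have h3 : 2 * k / 2 = k := by omega
  have h4 : ((2 * k + 1) ^ 2 - 1) / 2 = 2 * k ^ 2 + 2 * k := by
    have : (2 * k + 1) ^ 2 = 4 * k ^ 2 + 4 * k + 1 := by ring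
    omega
  rw [h3, h4, nsmul_eq_mul]
  push_cast
  ring
end

section
/- Let p be an odd prime and define L(d) = ∑_{i=(p+1)/2}^{p-1} ( ⌊i·d/p⌋ - ⌊i·d/p - (1 - 1/p)·(p+1)·d/(2p)⌋ ). Then L(p²-1) = ((p-1)/2)·((p²-1)/2). -/
theorem stmt_3 (p : ℕ) (hp : p.Prime) (hodd : Odd p) :
    L p (p ^ 2 - 1) = (((p - 1) / 2) * ((p ^ 2 - 1) / 2) : ℕ) := by
  obtain ⟨m, hm⟩ := hodd
  have hp2 := hp.two_le
  have hm1 : 1 ≤ m := by omega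
  have hP : (0:ℚ) < p := by positivity
  have hP3 : (3:ℚ) ≤ p := by exact_mod_cast (by omega : 3 ≤ p)
  have hsq : p ^ 2 = 4*m^2 + 4*m + 1 := by rw [hm]; ring
  have hd : ((p^2 - 1 : ℕ) : ℚ) = (p:ℚ)^2 - 1 := by
    rw [Nat.cast_sub (by nlinarith : 1 ≤ p^2)]; push_cast; ring
  have hkQ : (((p^2 - 1)/2 : ℕ) : ℚ) = ((p:ℚ)^2 - 1)/2 := by
    have h2k : 2 * ((p^2 - 1)/2) = p^2 - 1 := by omega
    rw [eq_div_iff (by norm_num : (2:ℚ) ≠ 0)]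
    rw [← hd]
    exact_mod_cast congrArg (Nat.cast : ℕ → ℚ) (by omega : ((p^2-1)/2) * 2 = p^2 - 1)
  rw [L]
  have hterm : ∀ i ∈ Finset.Icc ((p+1)/2) (p-1),
      (⌊((i : ℚ) * (p^2 - 1 : ℕ)) / p⌋ -
        ⌊((i : ℚ) * (p^2 - 1 : ℕ)) / p -
          (1 - 1 / (p:ℚ)) * (((p:ℚ)+1) * (p^2 - 1 : ℕ)) / (2 * p)⌋)
        = (((p^2 - 1)/2 : ℕ) : ℤ) := by
    intro i hi
    simp only [Finset.mem_Icc] at hi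
    have h1 : p + 1 ≤ 2 * i := by omega
    have hI1 : (p:ℚ) + 1 ≤ 2 * (i:ℚ) := by exact_mod_cast h1
    have hI2 : (i:ℚ) ≤ (p:ℚ) - 1 := by
      have : i + 1 ≤ p := by omega
      have := (Nat.cast_le (α := ℚ)).2 this
      push_cast at this; linarith
    have hf1 : ⌊((i : ℚ) * (p^2 - 1 : ℕ)) / p⌋ = (i:ℤ) * p - 1 := by
      rw [Int.floor_eq_iff, hd]
      push_cast
      constructor
      · rw [le_div_iff₀ hP]; nlinarith
      · rw [div_lt_iff₀ hP]; nlinarith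
    have key : ((i : ℚ) * (p^2 - 1 : ℕ)) / p -
          (1 - 1 / (p:ℚ)) * (((p:ℚ)+1) * (p^2 - 1 : ℕ)) / (2 * p)
        = (2*(i:ℚ)*(p:ℚ)*((p:ℚ)^2-1) - ((p:ℚ)^2-1)^2) / (2*(p:ℚ)^2) := by
      rw [hd]; field_simp; ring
    have hf2 : ⌊((i : ℚ) * (p^2 - 1 : ℕ)) / p -
          (1 - 1 / (p:ℚ)) * (((p:ℚ)+1) * (p^2 - 1 : ℕ)) / (2 * p)⌋
        = (i:ℤ) * p - (((p^2 - 1)/2 : ℕ) : ℤ) - 1 := by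
      rw [Int.floor_eq_iff, key, Int.cast_sub, Int.cast_sub, Int.cast_mul,
        Int.cast_one]
      simp only [Int.cast_natCast]
      rw [hkQ]
      constructor
      · rw [le_div_iff₀ (by positivity)]; nlinarith
      · rw [div_lt_iff₀ (by positivity)]; nlinarith
    rw [hf1, hf2]; ring
  rw [Finset.sum_congr rfl hterm, Finset.sum_const, Nat.card_Icc]
  have hcard : (p - 1) + 1 - (p+1)/2 = (p-1)/2 := by omega
  rw [hcard, nsmul_eq_mul]
  push_cast
  ring
end

section
/- Let p be an odd prime and define L(d) = ∑_{i=(p+1)/2}^{p-1} ( ⌊i·d/p⌋ - ⌊i·d/p - (1 - 1/p)·(p+1)·d/(2p)⌋ ). Then L(p-1) = (p-1)²/4. -/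
theorem stmt_4 (p : ℕ) (hp : p.Prime) (hodd : Odd p) :
    L p (p - 1) = (((p - 1) ^ 2 / 4) : ℕ) := by
  obtain ⟨k, hk⟩ := hodd
  have hk1 : 1 ≤ k := by
    rcases Nat.eq_zero_or_pos k with h | h
    · exfalso; subst h; simp at hk; subst hk; exact absurd hp (by norm_num)
    · exact h
  subst hk
  have h1 : 2 * k + 1 - 1 = 2 * k := by omega
  have h2 : (2 * k + 1 + 1) / 2 = k + 1 := by omega
  have h3 : (2 * k) ^ 2 / 4 = k ^ 2 := by
    rw [show (2*k)^2 = 4 * k^2 by ring]; omega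
  rw [L, h1, h2, h3]
  have hsum : ∀ i ∈ Finset.Icc (k+1) (2*k),
      (⌊((i : ℚ) * ((2*k : ℕ) : ℚ)) / ((2*k+1 : ℕ) : ℚ)⌋ -
        ⌊((i : ℚ) * ((2*k : ℕ) : ℚ)) / ((2*k+1 : ℕ) : ℚ) -
          (1 - 1 / ((2*k+1 : ℕ) : ℚ)) * ((((2*k+1 : ℕ) : ℚ) + 1) * ((2*k : ℕ) : ℚ)) /
            (2 * ((2*k+1 : ℕ) : ℚ))⌋) = (k : ℤ) := by
    intro i hi
    simp only [Finset.mem_Icc] at hi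
    obtain ⟨hi1, hi2⟩ := hi
    have hK1 : (1 : ℚ) ≤ (k : ℚ) := by exact_mod_cast hk1
    have hI1 : (k : ℚ) + 1 ≤ (i : ℚ) := by exact_mod_cast hi1
    have hI2 : (i : ℚ) ≤ 2 * (k : ℚ) := by exact_mod_cast hi2
    have hpos : (0 : ℚ) < 2 * (k : ℚ) + 1 := by linarith
    have hfl1 : ⌊((i : ℚ) * ((2*k : ℕ) : ℚ)) / ((2*k+1 : ℕ) : ℚ)⌋ = (i : ℤ) - 1 := by
      rw [Int.floor_eq_iff]
      push_cast
      constructor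
      · rw [le_div_iff₀ hpos]; nlinarith
      · rw [div_lt_iff₀ hpos]; nlinarith
    have hrw : ((i : ℚ) * ((2*k : ℕ) : ℚ)) / ((2*k+1 : ℕ) : ℚ) -
          (1 - 1 / ((2*k+1 : ℕ) : ℚ)) * ((((2*k+1 : ℕ) : ℚ) + 1) * ((2*k : ℕ) : ℚ)) /
            (2 * ((2*k+1 : ℕ) : ℚ)) =
        (2 * (k:ℚ) * (i:ℚ) * (2*(k:ℚ)+1) - 4 * (k:ℚ)^2 * ((k:ℚ)+1)) / ((2*(k:ℚ)+1)^2) := by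
      push_cast
      field_simp
      ring
    have hfl2 : ⌊((i : ℚ) * ((2*k : ℕ) : ℚ)) / ((2*k+1 : ℕ) : ℚ) -
          (1 - 1 / ((2*k+1 : ℕ) : ℚ)) * ((((2*k+1 : ℕ) : ℚ) + 1) * ((2*k : ℕ) : ℚ)) /
            (2 * ((2*k+1 : ℕ) : ℚ))⌋ = (i : ℤ) - 1 - (k : ℤ) := by
      rw [hrw, Int.floor_eq_iff]
      have hpos2 : (0 : ℚ) < (2*(k:ℚ)+1)^2 := by positivity
      push_cast
      constructor
      · rw [le_div_iff₀ hpos2]; nlinarith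
      · rw [div_lt_iff₀ hpos2]; nlinarith
    rw [hfl1, hfl2]; ring
  rw [Finset.sum_congr rfl hsum, Finset.sum_const, Nat.card_Icc]
  have : 2 * k + 1 - (k + 1) = k := by omega
  rw [this]
  push_cast
  ring
end

section
/- Let p be an odd prime, d a positive integer with p ∤ d, and define L(d) = ∑_{i=(p+1)/2}^{p-1} ( ⌊i·d/p⌋ - ⌊i·d/p - (1 - 1/p)·(p+1)·d/(2p)⌋ ). Then L(d) ≤ (p-1)(d-1)/2. -/
theorem stmt_9 (p d : ℕ) (hp : p.Prime) (hodd : Odd p) (hd : 0 < d)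
    (hpd : ¬ p ∣ d) :
    L p d ≤ ((p - 1) * (d - 1) / 2 : ℕ) := by
  obtain ⟨k, hk⟩ := hodd
  have hp1 : 1 < p := hp.one_lt
  have hk1 : 1 ≤ k := by omega
  have hq : (0:ℚ) < p := by exact_mod_cast hp.pos
  have hqv : (p:ℚ) = 2*(k:ℚ)+1 := by exact_mod_cast congrArg (Nat.cast : ℕ → ℚ) hk
  -- the c-term rewritten
  have hceq : (1 - 1 / (p : ℚ)) * (((p : ℚ) + 1) * d) / (2 * p)
      = ((p:ℚ)*p - 1)*d/(2*((p:ℚ)*p)) := by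
    field_simp; ring
  -- per-term bound
  have key : ∀ i ∈ Finset.Icc ((p + 1) / 2) (p - 1),
      (⌊((i : ℚ) * d) / p⌋ -
        ⌊((i : ℚ) * d) / p - (1 - 1 / (p : ℚ)) * (((p : ℚ) + 1) * d) / (2 * p)⌋)
      ≤ ((d:ℤ) - 1) := by
    intro i hi
    simp only [Finset.mem_Icc] at hi
    have hil : k + 1 ≤ i := by omega
    have hiu : i ≤ 2*k := by omega
    have hilq : ((k:ℚ) + 1) ≤ i := by exact_mod_cast hil
    have hiuq : (i:ℚ) ≤ 2*(k:ℚ) := by exact_mod_cast hiu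
    set x : ℚ := ((i : ℚ) * d) / p with hx
    rw [hceq]
    set c : ℚ := ((p:ℚ)*p - 1)*d/(2*((p:ℚ)*p)) with hc
    rcases eq_or_lt_of_le (show 1 ≤ d from hd) with h1 | h2
    · -- d = 1
      have hd1 : (d:ℚ) = 1 := by exact_mod_cast h1.symm
      have hx0 : ⌊x⌋ = 0 := by
        rw [Int.floor_eq_zero_iff]
        constructor
        · rw [hx]; positivity
        · rw [hx, hd1, mul_one, div_lt_one hq]
          nlinarith
      have hcx : c ≤ x := by
        rw [hc, hx, hd1, mul_one, mul_one, div_le_div_iff₀ (by positivity) hq]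
        nlinarith
      have hxc0 : (0:ℤ) ≤ ⌊x - c⌋ := by
        rw [Int.le_floor]
        push_cast
        linarith
      omega
    · -- d ≥ 2
      have hd2 : (2:ℚ) ≤ d := by exact_mod_cast h2
      have hcd : c ≤ (d:ℚ) - 1 := by
        have : c ≤ (d:ℚ)/2 := by
          rw [hc, div_le_div_iff₀ (by positivity) two_pos]
          nlinarith
        linarith
      have hfl : (⌊x⌋ : ℤ) - ((d:ℤ) - 1) ≤ ⌊x - c⌋ := by
        rw [Int.le_floor]
        push_cast
        have := Int.floor_le x
        linarith
      omega
  have hsum := Finset.sum_le_card_nsmul _ _ _ key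
  have hcard : (Finset.Icc ((p + 1) / 2) (p - 1)).card = k := by
    rw [Nat.card_Icc]; omega
  rw [hcard, nsmul_eq_mul] at hsum
  have hrhs : (((p - 1) * (d - 1) / 2 : ℕ) : ℤ) = (k:ℤ) * ((d:ℤ) - 1) := by
    have h1 : (p - 1) * (d - 1) / 2 = k * (d-1) := by
      have : (p-1) * (d-1) = 2 * (k * (d-1)) := by
        have hpk : p - 1 = 2 * k := by omega
        rw [hpk, mul_assoc]
      rw [this, Nat.mul_div_cancel_left _ (by norm_num)]
    rw [h1]
    push_cast [Nat.cast_sub hd]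
    ring
  rw [L]
  rw [hrhs]
  exact hsum
end

section
/- Let p be an odd prime and define L(d) = ∑_{i=(p+1)/2}^{p-1} ( ⌊i·d/p⌋ - ⌊i·d/p - (1 - 1/p)·(p+1)·d/(2p)⌋ ). If d₁, d₂ are positive integers with p ∤ d₁, p ∤ d₂ and d₁ ≡ d₂ (mod p²), d₁ ≤ d₂, then L(d₂) = L(d₁) + ((d₂ - d₁)/p²)·((p-1)/2)·((p²-1)/2). -/
lemma L_step (p d : ℕ) (hp2 : 2 ≤ p) (hodd : Odd p) :
    L p (d + p ^ 2) = L p d + (((p - 1) / 2) * ((p ^ 2 - 1) / 2) : ℕ) := by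
  obtain ⟨k, hk⟩ := hodd
  subst hk
  set p := 2 * k + 1 with hp
  have hp0 : (p : ℚ) ≠ 0 := by positivity
  have hk1 : 1 ≤ k := by omega
  have hm : (p ^ 2 - 1) / 2 = 2 * k ^ 2 + 2 * k := by
    simp only [hp]; ring_nf; omega
  have hm2 : (p - 1) / 2 = k := by omega
  have hIcc : Finset.Icc ((p + 1) / 2) (p - 1) = Finset.Icc (k + 1) (2 * k) := by
    congr 1 <;> omega
  have hmQ : ((2 * k ^ 2 + 2 * k : ℕ) : ℚ) = ((p : ℚ) ^ 2 - 1) / 2 := by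
    simp only [hp]; push_cast; ring
  have key : ∀ i ∈ Finset.Icc (k + 1) (2 * k),
      (⌊((i : ℚ) * ((d + p ^ 2 : ℕ) : ℚ)) / p⌋ -
        ⌊((i : ℚ) * ((d + p ^ 2 : ℕ) : ℚ)) / p -
          (1 - 1 / (p : ℚ)) * (((p : ℚ) + 1) * ((d + p ^ 2 : ℕ) : ℚ)) / (2 * p)⌋)
      = (⌊((i : ℚ) * d) / p⌋ -
        ⌊((i : ℚ) * d) / p - (1 - 1 / (p : ℚ)) * (((p : ℚ) + 1) * d) / (2 * p)⌋)
        + (2 * k ^ 2 + 2 * k : ℕ) := by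
    intro i _
    have h1 : ((i : ℚ) * ((d + p ^ 2 : ℕ) : ℚ)) / p = ((i : ℚ) * d) / p + ((i * p : ℤ) : ℚ) := by
      push_cast; field_simp
    have h2 : ((i : ℚ) * ((d + p ^ 2 : ℕ) : ℚ)) / p -
          (1 - 1 / (p : ℚ)) * (((p : ℚ) + 1) * ((d + p ^ 2 : ℕ) : ℚ)) / (2 * p)
        = (((i : ℚ) * d) / p - (1 - 1 / (p : ℚ)) * (((p : ℚ) + 1) * d) / (2 * p))
          + ((i * p - (2 * k ^ 2 + 2 * k : ℕ) : ℤ) : ℚ) := by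
      simp only [hp]
      push_cast
      have h3 : (2 * (k : ℚ) + 1) ≠ 0 := by positivity
      field_simp
      ring
    rw [h2, h1, Int.floor_add_intCast, Int.floor_add_intCast]
    push_cast
    ring
  rw [L, L, hIcc, Finset.sum_congr rfl key, Finset.sum_add_distrib, Finset.sum_const,
    Nat.card_Icc, hm, hm2]
  have h4 : 2 * k + 1 - (k + 1) = k := by omega
  rw [h4]
  push_cast
  ring

lemma L_iter (p d : ℕ) (hp2 : 2 ≤ p) (hodd : Odd p) (n : ℕ) :
    L p (d + n * p ^ 2) = L p d + (n * (((p - 1) / 2) * ((p ^ 2 - 1) / 2)) : ℕ) := by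
  induction n with
  | zero => simp
  | succ n ih =>
      have h : d + (n + 1) * p ^ 2 = (d + n * p ^ 2) + p ^ 2 := by ring
      rw [h, L_step _ _ hp2 hodd, ih]
      push_cast
      ring

theorem stmt_16 (p d₁ d₂ : ℕ) (hp : p.Prime) (hodd : Odd p)
    (hd₁ : 0 < d₁) (hd₂ : 0 < d₂) (hpd₁ : ¬ p ∣ d₁) (hpd₂ : ¬ p ∣ d₂)
    (hcong : d₁ ≡ d₂ [MOD p ^ 2]) (hle : d₁ ≤ d₂) :
    L p d₂ = L p d₁ + (((d₂ - d₁) / p ^ 2) * (((p - 1) / 2) * ((p ^ 2 - 1) / 2)) : ℕ) := by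
  have hdvd : p ^ 2 ∣ d₂ - d₁ := (Nat.modEq_iff_dvd' hle).mp hcong
  obtain ⟨n, hn⟩ := hdvd
  have hp2 : 2 ≤ p := hp.two_le
  have hp0 : 0 < p ^ 2 := by positivity
  have hd2 : d₂ = d₁ + n * p ^ 2 := by rw [Nat.mul_comm]; omega
  have hq : (d₂ - d₁) / p ^ 2 = n := by
    rw [hn, Nat.mul_div_cancel_left _ hp0]
  rw [hq, hd2, L_iter _ _ hp2 hodd]
end
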